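/- Let q ≥ 1 and a_1,…,a_q, b_1,…,b_q > 0 with e_i(b) ≥ e_i(a) for all i and the chain e_q(b)/e_q(a) ≥ ⋯ ≥ e_1(b)/e_1(a) ≥ 1. Let σ > 0 and f_1 = ∏ a_i/b_i. Then for 0 ≤ x < 1, (1 − f_1 x)^{−σ} ≤ {q+1}F{q}(σ,a;b;x) ≤ 1 − f_1 + f_1 (1−x)^{−σ}. -/

import Mathlib

open Finset Real MeasureTheory

noncomputable def rise (a : ℝ) (n : ℕ) : ℝ := ∏ k ∈ Finset.range n, (a + k)

noncomputable def esym {q : ℕ} (k : ℕ) (a : Fin q → ℝ) : ℝ :=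
  ∑ s ∈ Finset.powersetCard k (Finset.univ : Finset (Fin q)), ∏ i ∈ s, a i

open Filter

lemma rise_pos {σ : ℝ} (hσ : 0 < σ) (n : ℕ) : 0 < rise σ n :=
  Finset.prod_pos fun k _ => by positivity

lemma rise_succ (σ : ℝ) (n : ℕ) : rise σ (n + 1) = rise σ n * (σ + n) :=
  Finset.prod_range_succ _ _

lemma Gamma_rise {σ : ℝ} (hσ : 0 < σ) (n : ℕ) :
    Real.Gamma (σ + n) = rise σ n * Real.Gamma σ := by
  induction n with
  | zero => simp [rise]
  | succ n ih =>
    have hpos : (0:ℝ) < σ + n := by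
      have : (0:ℝ) ≤ n := Nat.cast_nonneg n
      linarith
    have h : σ + ((n + 1 : ℕ) : ℝ) = (σ + n) + 1 := by push_cast; ring
    rw [h, Real.Gamma_add_one hpos.ne', ih, rise_succ]; ring

lemma summable_binomial {σ y : ℝ} (hσ : 0 < σ) (hy0 : 0 ≤ y) (hy1 : y < 1) :
    Summable (fun n : ℕ => rise σ n * y ^ n / n.factorial) := by
  rcases eq_or_lt_of_le hy0 with rfl | hy
  · apply summable_of_ne_finset_zero (s := {0})
    intro n hn
    simp only [Finset.mem_singleton] at hn
    simp [zero_pow hn]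
  · set f : ℕ → ℝ := fun n => rise σ n * y ^ n / n.factorial with hf
    have hfpos : ∀ n, 0 < f n := fun n => by
      have := rise_pos hσ n
      have : (0:ℝ) < y ^ n := pow_pos hy n
      positivity
    apply summable_of_ratio_test_tendsto_lt_one hy1
      (Filter.Eventually.of_forall fun n => (hfpos n).ne')
    have key : ∀ n : ℕ, ‖f (n + 1)‖ / ‖f n‖ = y * ((σ - 1) / ((n : ℝ) + 1) + 1) := by
      intro n
      rw [Real.norm_of_nonneg (hfpos (n+1)).le, Real.norm_of_nonneg (hfpos n).le, hf]
      simp only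
      rw [rise_succ, pow_succ, Nat.factorial_succ]
      have h1 : (n.factorial : ℝ) ≠ 0 := Nat.cast_ne_zero.mpr n.factorial_ne_zero
      have h2 : ((n : ℝ) + 1) ≠ 0 := by positivity
      have h3 : rise σ n ≠ 0 := (rise_pos hσ n).ne'
      have h4 : y ^ n ≠ 0 := (pow_pos hy n).ne'
      field_simp
      push_cast
      ring
    simp_rw [key]
    have h0 : Tendsto (fun n : ℕ => (σ - 1) / ((n : ℝ) + 1)) atTop (nhds 0) := by
      have := (tendsto_const_div_atTop_nhds_zero_nat (σ - 1)).comp (tendsto_add_atTop_nat 1)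
      refine this.congr fun n => ?_
      simp only [Function.comp_apply]
      push_cast
      ring
    have hT : Tendsto (fun n : ℕ => y * ((σ - 1) / ((n : ℝ) + 1) + 1)) atTop
        (nhds (y * (0 + 1))) := (h0.add (tendsto_const_nhds (x := (1:ℝ)))).const_mul y
    simpa using hT

lemma hasSum_binomial {σ y : ℝ} (hσ : 0 < σ) (hy0 : 0 ≤ y) (hy1 : y < 1) :
    HasSum (fun n : ℕ => rise σ n * y ^ n / n.factorial) ((1 - y) ^ (-σ)) := by
  have hsum := summable_binomial hσ hy0 hy1
  rw [hsum.hasSum_iff]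
  have hG : 0 < Real.Gamma σ := Real.Gamma_pos_of_pos hσ
  set μ : Measure ℝ := volume.restrict (Set.Ioi 0) with hμ
  set F : ℕ → ℝ → ℝ := fun n t => (y ^ n / n.factorial) * (Real.exp (-t) * t ^ (σ + n - 1))
    with hF
  have hσn : ∀ n : ℕ, (0:ℝ) < σ + n := fun n => by
    have : (0:ℝ) ≤ n := Nat.cast_nonneg n; linarith
  have hint : ∀ n : ℕ, Integrable (F n) μ := fun n =>
    ((Real.GammaIntegral_convergent (hσn n)).const_mul _)
  have hval : ∀ n : ℕ, ∫ t, F n t ∂μ = Real.Gamma σ * (rise σ n * y ^ n / n.factorial) := by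
    intro n
    rw [hF]
    simp only
    rw [MeasureTheory.integral_const_mul, ← Real.Gamma_eq_integral (hσn n), Gamma_rise hσ n]
    ring
  have hnorm : ∀ n : ℕ, ∫ t, ‖F n t‖ ∂μ = ∫ t, F n t ∂μ := by
    intro n
    refine MeasureTheory.integral_congr_ae ?_
    filter_upwards [MeasureTheory.ae_restrict_mem measurableSet_Ioi] with t ht
    have h1 : 0 ≤ F n t := by
      have : (0:ℝ) < t ^ (σ + n - 1) := Real.rpow_pos_of_pos ht _
      have h2 : (0:ℝ) ≤ y ^ n := pow_nonneg hy0 n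
      positivity
    exact Real.norm_of_nonneg h1
  have hsnorm : Summable (fun n : ℕ => ∫ t, ‖F n t‖ ∂μ) := by
    apply Summable.congr (hsum.mul_left (Real.Gamma σ))
    intro n
    rw [hnorm n, hval n]
  have hswap := MeasureTheory.integral_tsum_of_summable_integral_norm hint hsnorm
  have hpt : ∀ t ∈ Set.Ioi (0:ℝ), (∑' n : ℕ, F n t)
      = t ^ (σ - 1) * Real.exp (-((1 - y) * t)) := by
    intro t ht
    have ht' : (0:ℝ) < t := ht
    have heq : (fun n : ℕ => F n t)
        = fun n : ℕ => (Real.exp (-t) * t ^ (σ - 1)) * ((y * t) ^ n / n.factorial) := by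
      funext n
      rw [hF]
      simp only
      rw [show σ + (n:ℝ) - 1 = (σ - 1) + n by ring, Real.rpow_add ht',
        Real.rpow_natCast, mul_pow]
      ring
    rw [heq, tsum_mul_left]
    have hexp : (∑' n : ℕ, (y * t) ^ n / (n.factorial : ℝ)) = Real.exp (y * t) := by
      rw [Real.exp_eq_exp_ℝ, NormedSpace.exp_eq_tsum_div]
    rw [hexp, show -((1 - y) * t) = -t + y * t by ring, Real.exp_add]
    ring
  have hI : ∫ t, (∑' n : ℕ, F n t) ∂μ
      = (1 / (1 - y)) ^ σ * Real.Gamma σ := by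
    rw [hμ]
    rw [MeasureTheory.setIntegral_congr_fun measurableSet_Ioi hpt]
    exact Real.integral_rpow_mul_exp_neg_mul_Ioi hσ (by linarith)
  have hGt : Real.Gamma σ * (∑' n : ℕ, rise σ n * y ^ n / n.factorial)
      = (1 / (1 - y)) ^ σ * Real.Gamma σ := by
    rw [← tsum_mul_left]
    calc ∑' n : ℕ, Real.Gamma σ * (rise σ n * y ^ n / n.factorial)
        = ∑' n : ℕ, ∫ t, F n t ∂μ := by
          exact tsum_congr fun n => (hval n).symm
      _ = ∫ t, (∑' n : ℕ, F n t) ∂μ := hswap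
      _ = (1 / (1 - y)) ^ σ * Real.Gamma σ := hI
  have h1y : (0:ℝ) < 1 - y := by linarith
  have : (∑' n : ℕ, rise σ n * y ^ n / n.factorial) = (1 / (1 - y)) ^ σ := by
    refine mul_left_cancel₀ hG.ne' ?_
    rw [hGt]; ring
  rw [this, one_div, Real.inv_rpow h1y.le, ← Real.rpow_neg h1y.le]

lemma esym_zero {q : ℕ} (a : Fin q → ℝ) : esym 0 a = 1 := by simp [esym]

lemma esym_top {q : ℕ} (a : Fin q → ℝ) : esym q a = ∏ i, a i := by
  have h : Finset.powersetCard q (Finset.univ : Finset (Fin q)) = {Finset.univ} := by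
    ext s
    simp only [Finset.mem_powersetCard, Finset.mem_singleton]
    constructor
    · rintro ⟨-, hs⟩
      exact Finset.eq_univ_of_card s (by simp [hs])
    · rintro rfl
      simp
  rw [esym, h, Finset.sum_singleton]

lemma esym_pos {q : ℕ} {k : ℕ} (hk : k ≤ q) {a : Fin q → ℝ} (ha : ∀ i, 0 < a i) :
    0 < esym k a := by
  refine Finset.sum_pos (fun s _ => Finset.prod_pos fun i _ => ha i) ?_
  rw [Finset.powersetCard_nonempty]
  simpa [Finset.card_univ] using hk

lemma prod_add_const {q : ℕ} (a : Fin q → ℝ) (t : ℝ) :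
    ∏ i, (a i + t) = ∑ k ∈ Finset.range (q + 1), esym k a * t ^ (q - k) := by
  rw [Finset.prod_add]
  have h1 : ∀ s : Finset (Fin q),
      (∏ i ∈ s, a i) * (∏ _i ∈ (Finset.univ : Finset (Fin q)) \ s, t)
        = (∏ i ∈ s, a i) * t ^ (q - s.card) := by
    intro s
    rw [Finset.prod_const, Finset.card_sdiff_of_subset (Finset.subset_univ s), Finset.card_univ,
      Fintype.card_fin]
  simp_rw [h1]
  rw [Finset.sum_powerset, Finset.card_univ, Fintype.card_fin]
  refine Finset.sum_congr rfl fun k _ => ?_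
  rw [esym, Finset.sum_mul]
  refine Finset.sum_congr rfl fun s hs => ?_
  rw [(Finset.mem_powersetCard.mp hs).2]

lemma esym_cross {q : ℕ} {a b : Fin q → ℝ} (ha : ∀ i, 0 < a i)
    (hchain : ∀ i : ℕ, i < q → esym i b / esym i a ≤ esym (i + 1) b / esym (i + 1) a)
    {k : ℕ} (hk : k ≤ q) : esym k b * esym q a ≤ esym q b * esym k a := by
  have mono : ∀ j, j ≤ q → ∀ k, k ≤ j → esym k b / esym k a ≤ esym j b / esym j a := by
    intro j
    induction j with
    | zero =>
      intro _ k hk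
      interval_cases k
      exact le_refl _
    | succ j ih =>
      intro hj k hk
      rcases Nat.eq_or_lt_of_le hk with rfl | h
      · exact le_refl _
      · exact (ih (le_trans (Nat.le_succ j) hj) k (Nat.lt_succ_iff.mp h)).trans
          (hchain j (Nat.lt_of_succ_le hj))
  have h := mono q le_rfl k hk
  rwa [div_le_div_iff₀ (esym_pos hk ha) (esym_pos le_rfl ha)] at h

theorem stmt12 (q : ℕ) (hq : 1 ≤ q) (a b : Fin q → ℝ)
    (ha : ∀ i, 0 < a i) (hb : ∀ i, 0 < b i)
    (he : ∀ i : ℕ, 1 ≤ i → i ≤ q → esym i a ≤ esym i b)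
    (hchain : ∀ i : ℕ, i < q → esym i b / esym i a ≤ esym (i + 1) b / esym (i + 1) a)
    (σ : ℝ) (hσ : 0 < σ) (x : ℝ) (hx0 : 0 ≤ x) (hx1 : x < 1) :
    (1 - (∏ i, a i / b i) * x) ^ (-σ)
      ≤ (∑' n : ℕ, rise σ n * ((∏ i, rise (a i) n) / (∏ i, rise (b i) n)) * x ^ n / (Nat.factorial n)) ∧
    (∑' n : ℕ, rise σ n * ((∏ i, rise (a i) n) / (∏ i, rise (b i) n)) * x ^ n / (Nat.factorial n))
      ≤ 1 - (∏ i, a i / b i) + (∏ i, a i / b i) * (1 - x) ^ (-σ) := by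
  set f1 : ℝ := ∏ i, a i / b i with hf1
  have hf1pos : 0 < f1 := Finset.prod_pos fun i _ => div_pos (ha i) (hb i)
  have hf1eq : f1 = esym q a / esym q b := by
    rw [hf1, esym_top, esym_top, Finset.prod_div_distrib]
  have hEa : 0 < esym q a := esym_pos le_rfl ha
  have hEb : 0 < esym q b := esym_pos le_rfl hb
  have hf1le1 : f1 ≤ 1 := by
    rw [hf1eq, div_le_one hEb]
    exact he q hq le_rfl
  -- ratio bounds
  have hA : ∀ t : ℝ, 0 ≤ t → ∏ i, (a i + t) ≤ ∏ i, (b i + t) := by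
    intro t ht
    rw [prod_add_const, prod_add_const]
    refine Finset.sum_le_sum fun k hk => ?_
    rcases Nat.eq_zero_or_pos k with rfl | hk1
    · rw [esym_zero, esym_zero]
    · have hk2 : k ≤ q := Nat.lt_succ_iff.mp (Finset.mem_range.mp hk)
      exact mul_le_mul_of_nonneg_right (he k hk1 hk2) (pow_nonneg ht _)
  have hB : ∀ t : ℝ, 0 ≤ t →
      esym q a * ∏ i, (b i + t) ≤ esym q b * ∏ i, (a i + t) := by
    intro t ht
    rw [prod_add_const, prod_add_const, Finset.mul_sum, Finset.mul_sum]
    refine Finset.sum_le_sum fun k hk => ?_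
    have hk2 : k ≤ q := Nat.lt_succ_iff.mp (Finset.mem_range.mp hk)
    have h := mul_le_mul_of_nonneg_right (esym_cross ha hchain hk2) (pow_nonneg ht (q - k))
    nlinarith [h]
  -- the ratio sequence
  set P : ℕ → ℝ := fun n => (∏ i, rise (a i) n) / (∏ i, rise (b i) n) with hP
  have hPa : ∀ n, 0 < ∏ i, rise (a i) n := fun n =>
    Finset.prod_pos fun i _ => rise_pos (ha i) n
  have hPb : ∀ n, 0 < ∏ i, rise (b i) n := fun n =>
    Finset.prod_pos fun i _ => rise_pos (hb i) n
  have hPpos : ∀ n, 0 < P n := fun n => div_pos (hPa n) (hPb n)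
  have hP0 : P 0 = 1 := by simp [hP, rise]
  have hrec : ∀ n : ℕ, P (n + 1) = P n * ((∏ i, (a i + (n:ℝ))) / (∏ i, (b i + (n:ℝ)))) := by
    intro n
    rw [hP]
    simp only
    rw [show (∏ i, rise (a i) (n+1)) = (∏ i, rise (a i) n) * ∏ i, (a i + (n:ℝ)) by
        rw [← Finset.prod_mul_distrib]; exact Finset.prod_congr rfl fun i _ => rise_succ (a i) n,
      show (∏ i, rise (b i) (n+1)) = (∏ i, rise (b i) n) * ∏ i, (b i + (n:ℝ)) by
        rw [← Finset.prod_mul_distrib]; exact Finset.prod_congr rfl fun i _ => rise_succ (b i) n,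
      mul_div_mul_comm]
  have hpbn : ∀ n : ℕ, (0:ℝ) < ∏ i, (b i + (n:ℝ)) := fun n =>
    Finset.prod_pos fun i _ => by
      have h1 := hb i
      have h2 : (0:ℝ) ≤ (n:ℝ) := n.cast_nonneg
      linarith
  have hratio_le1 : ∀ n : ℕ, (∏ i, (a i + (n:ℝ))) / (∏ i, (b i + (n:ℝ))) ≤ 1 := fun n =>
    (div_le_one (hpbn n)).mpr (hA n n.cast_nonneg)
  have hratio_ge : ∀ n : ℕ, f1 ≤ (∏ i, (a i + (n:ℝ))) / (∏ i, (b i + (n:ℝ))) := by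
    intro n
    rw [hf1eq, div_le_div_iff₀ hEb (hpbn n)]
    linarith [hB (n:ℝ) n.cast_nonneg]
  have hratio_pos : ∀ n : ℕ, (0:ℝ) < (∏ i, (a i + (n:ℝ))) / (∏ i, (b i + (n:ℝ))) := fun n =>
    lt_of_lt_of_le hf1pos (hratio_ge n)
  have hPle1 : ∀ n, P n ≤ 1 := by
    intro n
    induction n with
    | zero => rw [hP0]
    | succ n ih =>
      rw [hrec n]
      exact mul_le_one₀ ih (hratio_pos n).le (hratio_le1 n)
  have hPlef1 : ∀ n, 1 ≤ n → P n ≤ f1 := by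
    intro n hn
    induction n with
    | zero => omega
    | succ n ih =>
      rcases Nat.eq_zero_or_pos n with rfl | hn1
      · rw [hrec 0, hP0, one_mul, hf1eq]
        simp only [Nat.cast_zero, add_zero]
        rw [← esym_top, ← esym_top]
      · rw [hrec n]
        calc P n * ((∏ i, (a i + (n:ℝ))) / (∏ i, (b i + (n:ℝ))))
            ≤ f1 * 1 := mul_le_mul (ih hn1) (hratio_le1 n) (hratio_pos n).le hf1pos.le
          _ = f1 := mul_one f1
  have hPgef1 : ∀ n, f1 ^ n ≤ P n := by
    intro n
    induction n with
    | zero => simp [hP0]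
    | succ n ih =>
      rw [hrec n, pow_succ]
      exact mul_le_mul ih (hratio_ge n) hf1pos.le (hPpos n).le
  -- series terms
  set T : ℕ → ℝ := fun n => rise σ n * P n * x ^ n / n.factorial with hT
  have hTnn : ∀ n, 0 ≤ T n := fun n => by
    have h1 := rise_pos hσ n
    have h2 := hPpos n
    have h3 : (0:ℝ) ≤ x ^ n := pow_nonneg hx0 n
    positivity
  have hfac : ∀ n : ℕ, (0:ℝ) < n.factorial := fun n =>
    Nat.cast_pos.mpr n.factorial_pos
  have hTle : ∀ n, T n ≤ rise σ n * x ^ n / n.factorial := by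
    intro n
    rw [hT]
    simp only
    have key : rise σ n * P n * x ^ n ≤ rise σ n * x ^ n := by
      calc rise σ n * P n * x ^ n = P n * (rise σ n * x ^ n) := by ring
        _ ≤ 1 * (rise σ n * x ^ n) := by
            refine mul_le_mul_of_nonneg_right (hPle1 n) ?_
            have := rise_pos hσ n
            have : (0:ℝ) ≤ x ^ n := pow_nonneg hx0 n
            positivity
        _ = rise σ n * x ^ n := one_mul _
    gcongr
  have hTsum : Summable T := (summable_binomial hσ hx0 hx1).of_nonneg_of_le hTnn hTle
  have hfx0 : 0 ≤ f1 * x := mul_nonneg hf1pos.le hx0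
  have hfx1 : f1 * x < 1 := by nlinarith
  have hL := hasSum_binomial hσ hfx0 hfx1
  constructor
  · rw [← hL.tsum_eq]
    refine Summable.tsum_le_tsum ?_ hL.summable hTsum
    intro n
    show rise σ n * (f1 * x) ^ n / n.factorial ≤ T n
    rw [hT]
    simp only
    rw [mul_pow]
    have key : rise σ n * (f1 ^ n * x ^ n) ≤ rise σ n * P n * x ^ n := by
      have hrx : (0:ℝ) ≤ rise σ n * x ^ n := by
        have h1 := rise_pos hσ n
        have h2 : (0:ℝ) ≤ x ^ n := pow_nonneg hx0 n
        positivity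
      calc rise σ n * (f1 ^ n * x ^ n) = f1 ^ n * (rise σ n * x ^ n) := by ring
        _ ≤ P n * (rise σ n * x ^ n) := mul_le_mul_of_nonneg_right (hPgef1 n) hrx
        _ = rise σ n * P n * x ^ n := by ring
    exact (div_le_div_iff_of_pos_right (hfac n)).mpr key
  · have hU := hasSum_binomial hσ hx0 hx1
    have hU2 : HasSum
        (fun n : ℕ => f1 * (rise σ n * x ^ n / n.factorial) + (if n = 0 then 1 - f1 else 0))
        (f1 * (1 - x) ^ (-σ) + (1 - f1)) := (hU.mul_left f1).add (hasSum_ite_eq 0 (1 - f1))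
    have hle : ∀ n : ℕ, T n
        ≤ f1 * (rise σ n * x ^ n / n.factorial) + (if n = 0 then 1 - f1 else 0) := by
      intro n
      rcases Nat.eq_zero_or_pos n with rfl | hn
      · rw [hT]
        simp [hP0, rise]
      · rw [if_neg hn.ne', add_zero, hT]
        simp only
        have hrx : (0:ℝ) ≤ rise σ n * x ^ n := by
          have h1 := rise_pos hσ n
          have h2 : (0:ℝ) ≤ x ^ n := pow_nonneg hx0 n
          positivity
        have key : rise σ n * P n * x ^ n ≤ f1 * (rise σ n * x ^ n) := by
          calc rise σ n * P n * x ^ n = P n * (rise σ n * x ^ n) := by ring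
            _ ≤ f1 * (rise σ n * x ^ n) :=
                mul_le_mul_of_nonneg_right (hPlef1 n hn) hrx
        calc rise σ n * P n * x ^ n / n.factorial
            ≤ f1 * (rise σ n * x ^ n) / n.factorial := (div_le_div_iff_of_pos_right (hfac n)).mpr key
          _ = f1 * (rise σ n * x ^ n / n.factorial) := by ring
    have hfin := Summable.tsum_le_tsum hle hTsum hU2.summable
    rw [hU2.tsum_eq] at hfin
    calc (∑' n : ℕ, T n) ≤ f1 * (1 - x) ^ (-σ) + (1 - f1) := hfin
      _ = 1 - f1 + f1 * (1 - x) ^ (-σ) := by ring
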